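/- Fix p_B ∈ (1/2, 1] and K₀ > 0, and suppose there is D > 0 such that for every n ≥ 1, Bernoulli site percolation with parameter p_B on T^(n) contains a left-right crossing with probability at least 1 − n·exp(−D·n). For each N ≥ 2, let π_N : V_N → [0,1] be site probabilities on the vertex set V_N of T^(N) with associated inhomogeneous site percolation measure μ_{π_N}, and suppose there is a square sub-box Q_N ⊆ V_N, a translate of the box {0,…,ρ(N)−1} × {0,…,ρ(N)−1}, on which π_N ≡ p_B, where ρ(N) ≥ K₀·log N. Then there exist C₁ > 0 and N₀ such that for all N ≥ N₀, the type II error β(N) = μ_{π_N}({ω : T(ω) < K₀·log N}) satisfies β(N) ≤ exp(−C₁·ρ(N)). -/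

import Mathlib

open MeasureTheory

noncomputable def bernoulliBool (p : ℝ) : Measure Bool :=
  (PMF.bernoulli (min (Real.toNNReal p) 1) (min_le_right _ _)).toMeasure

instance (p : ℝ) : IsProbabilityMeasure (bernoulliBool p) :=
  PMF.toMeasure.isProbabilityMeasure _

/-- Inhomogeneous Bernoulli site percolation: the product probability measure on
configurations `ω : V → Bool` under which the coordinates are independent and
`ω s = true` with probability `π s` (when `0 ≤ π s ≤ 1`). -/
noncomputable def sitePerc {V : Type*} [Fintype V] (π : V → ℝ) :
    Measure (V → Bool) :=
  Measure.pi fun s => bernoulliBool (π s)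

/-- The subgraph of occupied sites. -/
def occGraph {V : Type*} (G : SimpleGraph V) (ω : V → Bool) : SimpleGraph V where
  Adj u v := G.Adj u v ∧ ω u = true ∧ ω v = true
  symm := ⟨fun _ _ h => ⟨h.1.symm, h.2.2, h.2.1⟩⟩
  loopless := ⟨fun v h => G.loopless.irrefl v h.1⟩

/-- The occupied cluster of a site `s`: all occupied sites joined to `s` by a
path of occupied sites (empty if `s` is not occupied). -/
def cluster {V : Type*} (G : SimpleGraph V) (ω : V → Bool) (s : V) : Set V :=
  {t | ω s = true ∧ ω t = true ∧ (occGraph G ω).Reachable s t}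

/-- The maximal occupied cluster size `T(ω) = max_s |C(s,ω)|`. -/
noncomputable def maxCluster {V : Type*} [Fintype V] (G : SimpleGraph V) (ω : V → Bool) : ℕ :=
  Finset.univ.sup fun s => (cluster G ω s).ncard

/-- The finite triangular lattice `T^(N)`: vertices are the points of the box
`{0,…,N−1} × {0,…,N−1} ⊆ ℤ × ℤ`, two distinct vertices `s`, `t` being adjacent iff
`t − s ∈ {(1,0),(−1,0),(0,1),(0,−1),(1,1),(−1,−1)}`. -/
def triLattice (N : ℕ) : SimpleGraph (Fin N × Fin N) where
  Adj s t := (((t.1 : ℤ) - (s.1 : ℤ), (t.2 : ℤ) - (s.2 : ℤ)) : ℤ × ℤ) ∈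
    ({(1,0), (-1,0), (0,1), (0,-1), (1,1), (-1,-1)} : Set (ℤ × ℤ))
  symm := by
    constructor
    intro s t h
    simp only [Set.mem_insert_iff, Set.mem_singleton_iff, Prod.mk.injEq] at h ⊢
    omega
  loopless := by
    constructor
    intro s h
    simp only [Set.mem_insert_iff, Set.mem_singleton_iff, Prod.mk.injEq, sub_self] at h
    omega

/-- A left-right crossing of `T^(N)` in a configuration `ω`: a finite sequence of
occupied sites `s₁, …, s_n` such that consecutive sites are adjacent, `s₁` has
first coordinate `0`, and `s_n` has first coordinate `N − 1`. -/
def HasLeftRightCrossing (N : ℕ) (ω : Fin N × Fin N → Bool) : Prop :=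
  ∃ (m : ℕ) (f : Fin (m + 1) → Fin N × Fin N),
    (∀ k, ω (f k) = true) ∧
    (∀ k : Fin m, (triLattice N).Adj (f k.castSucc) (f k.succ)) ∧
    ((f 0).1 : ℕ) = 0 ∧ ((f (Fin.last m)).1 : ℕ) = N - 1

open Set in
private lemma map_pi_comp {ι κ α : Type*} [Fintype ι] [Fintype κ] [MeasurableSpace α]
    (μ : ι → Measure α) [∀ i, IsProbabilityMeasure (μ i)] (e : κ → ι)
    (he : Function.Injective e) :
    Measure.map (fun ω : ι → α => ω ∘ e) (Measure.pi μ) = Measure.pi (fun k => μ (e k)) := by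
  refine (Measure.pi_eq ?_).symm
  intro s hs
  classical
  set t : ι → Set α := Function.extend e s (fun _ => Set.univ) with ht
  have htm : ∀ i, MeasurableSet (t i) := by
    intro i
    by_cases h : ∃ k, e k = i
    · obtain ⟨k, rfl⟩ := h
      rw [ht, he.extend_apply]; exact hs k
    · rw [ht, Function.extend_apply' _ _ _ h]; exact MeasurableSet.univ
  have hmeas : Measurable (fun ω : ι → α => ω ∘ e) :=
    measurable_pi_iff.2 fun k => measurable_pi_apply (e k)
  have hpre : (fun ω : ι → α => ω ∘ e) ⁻¹' (Set.pi Set.univ s) = Set.pi Set.univ t := by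
    ext ω
    simp only [Set.mem_preimage, Set.mem_pi, Set.mem_univ, forall_true_left, Function.comp]
    constructor
    · intro h i
      by_cases hi : ∃ k, e k = i
      · obtain ⟨k, rfl⟩ := hi
        rw [ht, he.extend_apply]; exact h k
      · rw [ht, Function.extend_apply' _ _ _ hi]; trivial
    · intro h k
      have := h (e k)
      rwa [ht, he.extend_apply] at this
  rw [Measure.map_apply hmeas (MeasurableSet.univ_pi hs), hpre, Measure.pi_pi]
  rw [show (∏ i, μ i (t i)) = ∏ i ∈ Finset.univ.image e, μ i (t i) from
    (Finset.prod_subset (Finset.subset_univ _) (by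
      intro i _ hi
      rw [ht, Function.extend_apply' _ _ _ (by
        intro ⟨k, hk⟩; exact hi (Finset.mem_image.2 ⟨k, Finset.mem_univ k, hk⟩))]
      exact measure_univ)).symm]
  rw [Finset.prod_image (fun a _ b _ h => he h)]
  refine Finset.prod_congr rfl fun k _ => ?_
  rw [ht, he.extend_apply]

private lemma discrete_ivt (g : ℕ → ℤ) (n : ℕ) (hstep : ∀ k < n, |g (k+1) - g k| ≤ 1)
    (c : ℤ) (h0 : g 0 ≤ c) (h1 : c ≤ g n) : ∃ k ≤ n, g k = c := by
  induction n with
  | zero => exact ⟨0, le_refl 0, le_antisymm h0 h1⟩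
  | succ n ih =>
    by_cases h : c ≤ g n
    · obtain ⟨k, hk, hgk⟩ := ih (fun k hk => hstep k (by omega)) h
      exact ⟨k, by omega, hgk⟩
    · have := abs_le.1 (hstep n (by omega))
      exact ⟨n+1, le_refl _, by omega⟩

private lemma crossing_cluster {N r a b : ℕ} (hr : 1 ≤ r)
    (e : Fin r × Fin r → Fin N × Fin N)
    (he1 : ∀ s, ((e s).1 : ℕ) = a + (s.1 : ℕ)) (he2 : ∀ s, ((e s).2 : ℕ) = b + (s.2 : ℕ))
    (ω : Fin N × Fin N → Bool) (hω : HasLeftRightCrossing r (ω ∘ e)) :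
    r ≤ maxCluster (triLattice N) ω := by
  classical
  obtain ⟨m, f, hocc, hadj, h0, hlast⟩ := hω
  have hadjN : ∀ k : Fin m, (triLattice N).Adj (e (f k.castSucc)) (e (f k.succ)) := by
    intro k
    have h := hadj k
    have e1u := he1 (f k.castSucc); have e1v := he1 (f k.succ)
    have e2u := he2 (f k.castSucc); have e2v := he2 (f k.succ)
    simp only [triLattice, Set.mem_insert_iff, Set.mem_singleton_iff, Prod.mk.injEq] at h ⊢
    omega
  have hreach : ∀ j : ℕ, ∀ hj : j < m + 1,
      (occGraph (triLattice N) ω).Reachable (e (f 0)) (e (f ⟨j, hj⟩)) := by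
    intro j
    induction j with
    | zero =>
      intro hj
      have h0' : (⟨0, hj⟩ : Fin (m+1)) = 0 := by ext; simp
      rw [h0']
    | succ j ih =>
      intro hj
      refine (ih (by omega)).trans (SimpleGraph.Adj.reachable ?_)
      have hA := hadjN ⟨j, by omega⟩
      rw [Fin.castSucc_mk, Fin.succ_mk] at hA
      exact And.intro hA ⟨hocc _, hocc _⟩
  have hstep : ∀ k < m, |(((f ⟨min (k+1) m, by omega⟩).1 : ℕ) : ℤ) -
      (((f ⟨min k m, by omega⟩).1 : ℕ) : ℤ)| ≤ 1 := by
    intro k hk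
    have hA := hadj ⟨k, hk⟩
    simp only [triLattice, Set.mem_insert_iff, Set.mem_singleton_iff, Prod.mk.injEq] at hA
    have h1 : (⟨k, hk⟩ : Fin m).castSucc = ⟨min k m, by omega⟩ := by
      rw [Fin.castSucc_mk]; ext; simp; omega
    have h2 : (⟨k, hk⟩ : Fin m).succ = ⟨min (k+1) m, by omega⟩ := by
      rw [Fin.succ_mk]; ext; simp; omega
    rw [h1, h2] at hA
    rw [abs_le]; omega
  have hivt : ∀ j : ℕ, j < r → ∃ k : Fin (m+1), ((f k).1 : ℕ) = j := by
    intro j hj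
    obtain ⟨k, hk, hgk⟩ := discrete_ivt
      (fun k => (((f ⟨min k m, by omega⟩).1 : ℕ) : ℤ)) m hstep (j : ℤ)
      (by
        show (((f ⟨min 0 m, by omega⟩).1 : ℕ) : ℤ) ≤ (j : ℤ)
        have h : (⟨min 0 m, by omega⟩ : Fin (m+1)) = 0 := by ext; simp
        rw [h, h0]; exact_mod_cast Nat.zero_le j)
      (by
        show (j : ℤ) ≤ (((f ⟨min m m, by omega⟩).1 : ℕ) : ℤ)
        have h : (⟨min m m, by omega⟩ : Fin (m+1)) = Fin.last m := by ext; simp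
        rw [h, hlast]
        omega)
    refine ⟨⟨min k m, by omega⟩, ?_⟩
    exact_mod_cast hgk
  set s₀ := e (f 0) with hs₀
  have hmem : ∀ j : Fin r,
      ∃ t ∈ cluster (triLattice N) ω s₀, ((t : Fin N × Fin N).1 : ℕ) = a + j := by
    intro j
    obtain ⟨k, hk⟩ := hivt j j.isLt
    refine ⟨e (f k), ⟨hocc 0, hocc k, ?_⟩, by rw [he1, hk]⟩
    have := hreach k.1 k.isLt
    simpa using this
  choose F hF hF1 using hmem
  have hFinj : Function.Injective F := by
    intro i j hij
    have : a + (i : ℕ) = a + (j : ℕ) := by rw [← hF1 i, ← hF1 j, hij]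
    exact Fin.ext (by omega)
  have hsub : Set.range F ⊆ cluster (triLattice N) ω s₀ := by
    rintro _ ⟨j, rfl⟩; exact hF j
  have hcard : r ≤ (cluster (triLattice N) ω s₀).ncard := by
    have : (Set.range F).ncard = r := by
      rw [← Set.image_univ, Set.ncard_image_of_injective _ hFinj, Set.ncard_univ,
        Nat.card_eq_fintype_card, Fintype.card_fin]
    rw [← this]
    exact Set.ncard_le_ncard hsub (Set.toFinite _)
  calc r ≤ (cluster (triLattice N) ω s₀).ncard := hcard
    _ ≤ maxCluster (triLattice N) ω :=
      Finset.le_sup (f := fun s => (cluster (triLattice N) ω s).ncard) (Finset.mem_univ s₀)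

private lemma log_le_half_mul {D : ℝ} (hD : 0 < D) {r : ℝ} (hr : max 1 (16/D^2) ≤ r) :
    Real.log r ≤ D/2 * r := by
  have hr1 : 1 ≤ r := le_trans (le_max_left _ _) hr
  have hr2 : 16/D^2 ≤ r := le_trans (le_max_right _ _) hr
  have hs0 : 0 ≤ Real.sqrt r := Real.sqrt_nonneg r
  have hsq : Real.sqrt r * Real.sqrt r = r := Real.mul_self_sqrt (by linarith)
  have hss : 4/D ≤ Real.sqrt r := by
    rw [show Real.sqrt r = Real.sqrt r from rfl]
    have h16 : (4/D)^2 ≤ r := by rw [div_pow]; norm_num; linarith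
    nlinarith [sq_nonneg (Real.sqrt r - 4/D), sq_nonneg (Real.sqrt r + 4/D), hD,
      div_nonneg (by norm_num : (0:ℝ) ≤ 4) hD.le]
  have hspos : 0 < Real.sqrt r := by nlinarith
  have h1 : Real.log (Real.sqrt r) ≤ Real.sqrt r - 1 := Real.log_le_sub_one_of_pos hspos
  have h2 : Real.log (Real.sqrt r) = Real.log r / 2 := Real.log_sqrt (by linarith)
  have hDinv : D * (4/D) = 4 := by field_simp
  nlinarith [mul_nonneg (mul_nonneg (sub_nonneg.2 hss) hs0) hD.le, hDinv, hD, hsq]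

/-- **Exponential rate for the type II error (Theorem 10 (2)).**
Fix `p_B ∈ (1/2, 1]` and `K₀ > 0`, and suppose there is `D > 0` such that for every
`n ≥ 1`, Bernoulli site percolation with parameter `p_B` on `T^(n)` contains a
left-right crossing with probability at least `1 − n·exp(−D·n)`. For each `N ≥ 2`
let `π_N : V_N → [0,1]` be site probabilities on `T^(N)` and suppose there is a
square sub-box `Q_N ⊆ V_N`, a translate of `{0,…,ρ(N)−1} × {0,…,ρ(N)−1}`, with
`π_N ≡ p_B` on `Q_N`, where `ρ(N) ≥ K₀·log N`. Then there are `C₁ > 0` and `N₀`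
such that for all `N ≥ N₀`, the type II error
`β(N) = μ_{π_N}(T < K₀·log N)` satisfies `β(N) ≤ exp(−C₁·ρ(N))`. -/

theorem type_two_error_exponential_rate
    (pB : ℝ) (hpB : 1/2 < pB) (hpB1 : pB ≤ 1)
    (K₀ : ℝ) (hK₀ : 0 < K₀)
    (D : ℝ) (hD : 0 < D)
    (hcross : ∀ n : ℕ, 1 ≤ n →
      ENNReal.ofReal (1 - n * Real.exp (-(D * n))) ≤
        sitePerc (fun _ : Fin n × Fin n => pB) {ω | HasLeftRightCrossing n ω})
    (π : (N : ℕ) → Fin N × Fin N → ℝ)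
    (hπ0 : ∀ N s, 0 ≤ π N s) (hπ1 : ∀ N s, π N s ≤ 1)
    (ρ : ℕ → ℕ)
    (hρ : ∀ N : ℕ, 2 ≤ N → K₀ * Real.log N ≤ (ρ N : ℝ))
    (hQ : ∀ N : ℕ, 2 ≤ N → ∃ a b : ℕ, a + ρ N ≤ N ∧ b + ρ N ≤ N ∧
      ∀ s : Fin N × Fin N, a ≤ (s.1 : ℕ) → (s.1 : ℕ) < a + ρ N →
        b ≤ (s.2 : ℕ) → (s.2 : ℕ) < b + ρ N → π N s = pB) :
    ∃ C₁ : ℝ, 0 < C₁ ∧ ∃ N₀ : ℕ, ∀ N : ℕ, N₀ ≤ N →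
      sitePerc (π N)
          {ω | (maxCluster (triLattice N) ω : ℝ) < K₀ * Real.log N} ≤
        ENNReal.ofReal (Real.exp (-(C₁ * ρ N))) := by
  classical
  refine ⟨D/2, by positivity, max 2 (⌈Real.exp ((max 1 (16/D^2))/K₀)⌉₊ + 1), ?_⟩
  intro N hN
  have hN2 : 2 ≤ N := le_trans (le_max_left _ _) hN
  have hNpos : (0:ℝ) < N := by positivity
  have hρN : max 1 (16/D^2) ≤ (ρ N : ℝ) := by
    have h1 : (⌈Real.exp ((max 1 (16/D^2))/K₀)⌉₊ + 1 : ℕ) ≤ N := le_trans (le_max_right _ _) hN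
    have h2 : Real.exp ((max 1 (16/D^2))/K₀) ≤ (N : ℝ) := by
      calc Real.exp ((max 1 (16/D^2))/K₀) ≤ (⌈Real.exp ((max 1 (16/D^2))/K₀)⌉₊ : ℝ) :=
            Nat.le_ceil _
        _ ≤ (N : ℝ) := by exact_mod_cast Nat.le_of_succ_le h1
    have h3 : (max 1 (16/D^2))/K₀ ≤ Real.log N := (Real.le_log_iff_exp_le hNpos).2 h2
    have h4 : max 1 (16/D^2) ≤ K₀ * Real.log N := by
      rw [div_le_iff₀ hK₀] at h3; linarith
    linarith [hρ N hN2]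
  have hr1R : (1:ℝ) ≤ (ρ N : ℝ) := le_trans (le_max_left _ _) hρN
  have hr1 : 1 ≤ ρ N := by exact_mod_cast hr1R
  obtain ⟨a, b, har, hbr, hpb⟩ := hQ N hN2
  set r := ρ N with hrdef
  let e : Fin r × Fin r → Fin N × Fin N := fun s =>
    (⟨a + s.1.1, by have := s.1.isLt; omega⟩, ⟨b + s.2.1, by have := s.2.isLt; omega⟩)
  have he1 : ∀ s, ((e s).1 : ℕ) = a + (s.1 : ℕ) := fun s => rfl
  have he2 : ∀ s, ((e s).2 : ℕ) = b + (s.2 : ℕ) := fun s => rfl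
  have he_inj : Function.Injective e := by
    intro s t hst
    have h1 : a + s.1.1 = a + t.1.1 := congrArg (fun z => (z.1 : ℕ)) hst
    have h2 : b + s.2.1 = b + t.2.1 := congrArg (fun z => (z.2 : ℕ)) hst
    exact Prod.ext (Fin.ext (by omega)) (Fin.ext (by omega))
  have hpbe : ∀ k, π N (e k) = pB := by
    intro k
    refine hpb (e k) ?_ ?_ ?_ ?_ <;>
      simp only [he1, he2] <;> [omega; (have := k.1.isLt; omega); omega; (have := k.2.isLt; omega)]
  have hmeasmap : Measurable (fun ω : Fin N × Fin N → Bool => ω ∘ e) :=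
    measurable_pi_iff.2 fun k => measurable_pi_apply (e k)
  have hmap : Measure.map (fun ω : Fin N × Fin N → Bool => ω ∘ e) (sitePerc (π N)) =
      sitePerc (fun _ : Fin r × Fin r => pB) := by
    unfold sitePerc
    rw [map_pi_comp _ e he_inj]
    congr 1
    funext k
    rw [hpbe k]
  set A := {ω' : Fin r × Fin r → Bool | HasLeftRightCrossing r ω'} with hA
  set B := (fun ω : Fin N × Fin N → Bool => ω ∘ e) ⁻¹' A with hB
  have hmsA : MeasurableSet A := A.toFinite.measurableSet
  have hmsB : MeasurableSet B := B.toFinite.measurableSet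
  have hBA : sitePerc (π N) B = sitePerc (fun _ : Fin r × Fin r => pB) A := by
    rw [hB, ← Measure.map_apply hmeasmap hmsA, hmap]
  set x := (r : ℝ) * Real.exp (-(D * r)) with hxdef
  have hx0 : 0 ≤ x := by positivity
  have hlow : ENNReal.ofReal (1 - x) ≤ sitePerc (π N) B := by
    rw [hBA]; exact hcross r hr1
  haveI : IsProbabilityMeasure (sitePerc (π N)) := by
    unfold sitePerc; infer_instance
  have hsub : {ω | (maxCluster (triLattice N) ω : ℝ) < K₀ * Real.log N} ⊆ Bᶜ := by
    intro ω hω hωB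
    have hcr : HasLeftRightCrossing r (ω ∘ e) := hωB
    have h1 : r ≤ maxCluster (triLattice N) ω := crossing_cluster hr1 e he1 he2 ω hcr
    have h2 : (r : ℝ) ≤ (maxCluster (triLattice N) ω : ℝ) := by exact_mod_cast h1
    have h3 := hρ N hN2
    simp only [Set.mem_setOf_eq] at hω
    linarith
  have hrpos : (0:ℝ) < r := by linarith
  have hlogr : Real.log r ≤ D/2 * r := log_le_half_mul hD hρN
  have hrle : (r:ℝ) ≤ Real.exp (D/2 * r) := by
    calc (r:ℝ) = Real.exp (Real.log r) := (Real.exp_log hrpos).symm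
      _ ≤ Real.exp (D/2 * r) := Real.exp_le_exp.2 hlogr
  have hfinal : x ≤ Real.exp (-(D/2 * r)) := by
    calc x ≤ Real.exp (D/2 * r) * Real.exp (-(D * r)) :=
          mul_le_mul_of_nonneg_right hrle (Real.exp_pos _).le
      _ = Real.exp (-(D/2 * r)) := by rw [← Real.exp_add]; ring_nf
  calc sitePerc (π N) {ω | (maxCluster (triLattice N) ω : ℝ) < K₀ * Real.log N}
      ≤ sitePerc (π N) Bᶜ := measure_mono hsub
    _ = 1 - sitePerc (π N) B := prob_compl_eq_one_sub hmsB
    _ ≤ 1 - ENNReal.ofReal (1 - x) := tsub_le_tsub_left hlow 1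
    _ ≤ ENNReal.ofReal x := by
        rw [tsub_le_iff_right]
        by_cases hx1 : x ≤ 1
        · rw [← ENNReal.ofReal_add hx0 (by linarith)]
          norm_num
        · calc (1:ENNReal) = ENNReal.ofReal 1 := by simp
            _ ≤ ENNReal.ofReal x := ENNReal.ofReal_le_ofReal (by linarith)
            _ ≤ ENNReal.ofReal x + ENNReal.ofReal (1 - x) := le_self_add
    _ ≤ ENNReal.ofReal (Real.exp (-(D/2 * r))) := ENNReal.ofReal_le_ofReal hfinal
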